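/- Consider the reduced ODE system dP₀/dt = Γ P₁² P₀, dP₁/dt = -2Γ P₁² P₀ with Γ > 0 and initial data P₀(0) > 0, P₁(0) > 0. Then: (a) 2P₀(t) + P₁(t) = 2P₀(0) + P₁(0) for all t ≥ 0; (b) P₀ is nondecreasing and P₁ is nonincreasing, and both remain positive; (c) P₁(t) → 0 as t → ∞; consequently (d) P₀(t) → P₀(0) + ½P₁(0) as t → ∞. -/

import Mathlib

open Filter Set

lemma linear_ode_sol (c f : ℝ → ℝ) (hc : Continuous c)
    (hf : ∀ t : ℝ, 0 ≤ t → HasDerivAt f (c t * f t) t) :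
    ∀ t : ℝ, 0 ≤ t → f t = Real.exp (∫ s in (0:ℝ)..t, c s) * f 0 := by
  intro t ht
  set C : ℝ → ℝ := fun u => ∫ s in (0:ℝ)..u, c s with hC
  have hCd : ∀ u : ℝ, HasDerivAt C (c u) u := fun u =>
    (hc.integral_hasStrictDerivAt 0 u).hasDerivAt
  set g : ℝ → ℝ := fun u => Real.exp (-C u) * f u with hg
  have hgd : ∀ u : ℝ, 0 ≤ u → HasDerivAt g 0 u := by
    intro u hu
    have h1 : HasDerivAt (fun v => Real.exp (-C v)) (Real.exp (-C u) * (-c u)) u :=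
      (((hCd u).neg).exp)
    have : HasDerivAt (fun v => Real.exp (-C v) * f v)
        (Real.exp (-C u) * -c u * f u + Real.exp (-C u) * (c u * f u)) u := h1.mul (hf u hu)
    convert this using 1
    ring
  have hcont : ContinuousOn g (Icc 0 t) := by
    intro u hu
    exact ((hgd u hu.1).continuousAt).continuousWithinAt
  have := constant_of_has_deriv_right_zero hcont
    (fun u hu => (hgd u hu.1).hasDerivWithinAt) t (by exact ⟨ht, le_refl t⟩)
  have hg0 : g 0 = f 0 := by
    simp [hg, hC, intervalIntegral.integral_same]
  rw [hg0] at this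
  have h2 : Real.exp (-C t) * f t = f 0 := this
  have : Real.exp (C t) * (Real.exp (-C t) * f t) = Real.exp (C t) * f 0 := by rw [h2]
  rwa [← mul_assoc, ← Real.exp_add, add_neg_cancel, Real.exp_zero, one_mul] at this

/-- Ground state selection and energy equipartition in the reduced ODE system
`dP₀/dt = Γ P₁² P₀`, `dP₁/dt = -2Γ P₁² P₀` with `Γ > 0` and positive initial data:
(a) `2P₀ + P₁` is conserved; (b) `P₀` is nondecreasing, `P₁` is nonincreasing,
and both stay positive; (c) `P₁(t) → 0`; (d) `P₀(t) → P₀(0) + P₁(0)/2`. -/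
theorem reduced_system_ground_state_selection (Γ : ℝ) (hΓ : 0 < Γ)
    (P₀ P₁ : ℝ → ℝ) (h₀init : 0 < P₀ 0) (h₁init : 0 < P₁ 0)
    (hP₀ : ∀ t : ℝ, 0 ≤ t → HasDerivAt P₀ (Γ * (P₁ t) ^ 2 * P₀ t) t)
    (hP₁ : ∀ t : ℝ, 0 ≤ t → HasDerivAt P₁ (-(2 * Γ * (P₁ t) ^ 2 * P₀ t)) t) :
    (∀ t : ℝ, 0 ≤ t → 2 * P₀ t + P₁ t = 2 * P₀ 0 + P₁ 0) ∧
    (MonotoneOn P₀ (Ici 0) ∧ AntitoneOn P₁ (Ici 0) ∧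
      ∀ t : ℝ, 0 ≤ t → 0 < P₀ t ∧ 0 < P₁ t) ∧
    Tendsto P₁ atTop (nhds 0) ∧
    Tendsto P₀ atTop (nhds (P₀ 0 + P₁ 0 / 2)) := by
  -- continuity on Ici 0
  have hc₀ : ContinuousOn P₀ (Ici 0) := fun u hu =>
    ((hP₀ u hu).continuousAt).continuousWithinAt
  have hc₁ : ContinuousOn P₁ (Ici 0) := fun u hu =>
    ((hP₁ u hu).continuousAt).continuousWithinAt
  have hmax : ∀ u : ℝ, max u 0 ∈ Ici (0:ℝ) := fun u => le_max_right u 0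
  have hQ₀ : Continuous (fun u : ℝ => P₀ (max u 0)) :=
    hc₀.comp_continuous (continuous_id.max continuous_const) hmax
  have hQ₁ : Continuous (fun u : ℝ => P₁ (max u 0)) :=
    hc₁.comp_continuous (continuous_id.max continuous_const) hmax
  -- positivity of P₀
  have hpos₀ : ∀ t : ℝ, 0 ≤ t → 0 < P₀ t := by
    intro t ht
    have hsol := linear_ode_sol (fun u => Γ * (P₁ (max u 0)) ^ 2) P₀
      (by continuity) ?_ t ht
    · rw [hsol]; positivity
    · intro u hu
      have := hP₀ u hu
      simpa [max_eq_left hu] using this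
  -- positivity of P₁
  have hpos₁ : ∀ t : ℝ, 0 ≤ t → 0 < P₁ t := by
    intro t ht
    have hsol := linear_ode_sol
      (fun u => -(2 * Γ * P₁ (max u 0) * P₀ (max u 0))) P₁
      (by continuity) ?_ t ht
    · rw [hsol]; positivity
    · intro u hu
      have h := hP₁ u hu
      have : -(2 * Γ * (P₁ u) ^ 2 * P₀ u)
          = -(2 * Γ * P₁ (max u 0) * P₀ (max u 0)) * P₁ u := by
        rw [max_eq_left hu]; ring
      rwa [this] at h
  -- conservation
  have hcons : ∀ t : ℝ, 0 ≤ t → 2 * P₀ t + P₁ t = 2 * P₀ 0 + P₁ 0 := by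
    intro t ht
    have hF : ∀ u : ℝ, 0 ≤ u → HasDerivAt (fun v => 2 * P₀ v + P₁ v) 0 u := by
      intro u hu
      have : HasDerivAt (fun v => 2 * P₀ v + P₁ v)
          (2 * (Γ * P₁ u ^ 2 * P₀ u) + -(2 * Γ * P₁ u ^ 2 * P₀ u)) u :=
        ((hP₀ u hu).const_mul 2).add (hP₁ u hu)
      convert this using 1
      ring
    have hcont : ContinuousOn (fun v => 2 * P₀ v + P₁ v) (Icc 0 t) :=
      fun u hu => ((hF u hu.1).continuousAt).continuousWithinAt
    exact constant_of_has_deriv_right_zero hcont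
      (fun u hu => (hF u hu.1).hasDerivWithinAt) t ⟨ht, le_rfl⟩
  -- monotonicity
  have hmono : MonotoneOn P₀ (Ici 0) := by
    apply monotoneOn_of_deriv_nonneg (convex_Ici 0) hc₀
    · intro x hx
      rw [interior_Ici] at hx
      exact ((hP₀ x (le_of_lt hx)).differentiableAt).differentiableWithinAt
    · intro x hx
      rw [interior_Ici] at hx
      rw [(hP₀ x (le_of_lt hx)).deriv]
      have h1 := hpos₀ x (le_of_lt hx)
      have h2 := hpos₁ x (le_of_lt hx)
      positivity
  have hanti : AntitoneOn P₁ (Ici 0) := by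
    apply antitoneOn_of_deriv_nonpos (convex_Ici 0) hc₁
    · intro x hx
      rw [interior_Ici] at hx
      exact ((hP₁ x (le_of_lt hx)).differentiableAt).differentiableWithinAt
    · intro x hx
      rw [interior_Ici] at hx
      rw [(hP₁ x (le_of_lt hx)).deriv]
      have h1 := hpos₀ x (le_of_lt hx)
      have h2 := hpos₁ x (le_of_lt hx)
      have : 0 < 2 * Γ * (P₁ x) ^ 2 * P₀ x := by positivity
      linarith
  -- limit of P₁
  have hQanti : Antitone (fun t : ℝ => P₁ (max t 0)) := by
    intro s t hst
    exact hanti (hmax s) (hmax t) (max_le_max hst le_rfl)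
  have hbdd : BddBelow (range (fun t : ℝ => P₁ (max t 0))) := by
    refine ⟨0, ?_⟩
    rintro y ⟨t, rfl⟩
    exact (hpos₁ _ (hmax t)).le
  set L : ℝ := ⨅ t : ℝ, P₁ (max t 0) with hLdef
  have htendQ : Tendsto (fun t : ℝ => P₁ (max t 0)) atTop (nhds L) :=
    tendsto_atTop_ciInf hQanti hbdd
  have hL0 : 0 ≤ L := le_ciInf fun t => (hpos₁ _ (hmax t)).le
  have hLle : ∀ t : ℝ, 0 ≤ t → L ≤ P₁ t := by
    intro t ht
    have := ciInf_le hbdd t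
    rwa [max_eq_left ht] at this
  have hLzero : L = 0 := by
    by_contra hne
    have hL : 0 < L := lt_of_le_of_ne hL0 (Ne.symm hne)
    set ε : ℝ := 2 * Γ * L ^ 2 * P₀ 0 with hεdef
    have hε : 0 < ε := by positivity
    have hh : AntitoneOn (fun u => P₁ u + ε * u) (Ici 0) := by
      apply antitoneOn_of_deriv_nonpos (convex_Ici 0)
      · exact hc₁.add (continuous_const.mul continuous_id).continuousOn
      · intro x hx
        rw [interior_Ici] at hx
        exact (((hP₁ x hx.le).add
          ((hasDerivAt_id x).const_mul ε)).differentiableAt).differentiableWithinAt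
      · intro x hx
        rw [interior_Ici] at hx
        have hd : HasDerivAt (fun u => P₁ u + ε * u)
            (-(2 * Γ * (P₁ x) ^ 2 * P₀ x) + ε * 1) x :=
          (hP₁ x hx.le).add ((hasDerivAt_id x).const_mul ε)
        rw [hd.deriv]
        have h1 : P₀ 0 ≤ P₀ x := hmono (mem_Ici.2 (le_refl 0)) (mem_Ici.2 hx.le) hx.le
        have h2 : L ≤ P₁ x := hLle x hx.le
        have hsq : L ^ 2 ≤ P₁ x ^ 2 := by nlinarith
        have hA : 2 * Γ * L ^ 2 * P₀ 0 ≤ 2 * Γ * (P₁ x) ^ 2 * P₀ x :=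
          mul_le_mul (mul_le_mul_of_nonneg_left hsq (by positivity)) h1
            h₀init.le (by positivity)
        linarith
    have hT : (0:ℝ) ≤ P₁ 0 / ε := le_of_lt (div_pos h₁init hε)
    have := hh (mem_Ici.2 (le_refl 0)) (mem_Ici.2 hT) hT
    simp only [mul_zero, add_zero] at this
    have hval : ε * (P₁ 0 / ε) = P₁ 0 := mul_div_cancel₀ _ (ne_of_gt hε)
    have hcontra := hLle _ hT
    have := hpos₁ _ hT
    nlinarith
  rw [hLzero] at htendQ
  have hP1lim : Tendsto P₁ atTop (nhds 0) := by
    apply htendQ.congr'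
    filter_upwards [eventually_ge_atTop (0:ℝ)] with t ht
    rw [max_eq_left ht]
  refine ⟨hcons, ⟨hmono, hanti, fun t ht => ⟨hpos₀ t ht, hpos₁ t ht⟩⟩, hP1lim, ?_⟩
  have h2 : Tendsto (fun t => P₀ 0 + P₁ 0 / 2 - P₁ t / 2) atTop
      (nhds (P₀ 0 + P₁ 0 / 2 - 0 / 2)) :=
    tendsto_const_nhds.sub (hP1lim.div_const 2)
  simp only [zero_div, sub_zero] at h2
  apply h2.congr'
  filter_upwards [eventually_ge_atTop (0:ℝ)] with t ht
  have := hcons t ht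
  linarith
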